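/- Let U : ℝ^d → ℝ be twice continuously differentiable such that at every point the Hessian H = ∇²U satisfies H_{ii} ≥ Σ_{j≠i} |H_{ij}| for all i (diagonal dominance). Then for any x ∈ ℝ^d and any v ∈ {−1, 1}^d and each coordinate i, the function t ↦ ∂_i U(x + t·v)·v_i is non-decreasing, and hence the Zig-Zag rate t ↦ Σ_i (∂_i U(x + t·v)·v_i)_+ is non-decreasing. -/

import Mathlib

/-- For a C² potential `U` on `ℝ^d` whose Hessian is diagonally dominant everywhere, and a
Zig-Zag velocity `v ∈ {−1,1}^d`, each map `t ↦ ∂_i U(x + t·v)·v_i` is non-decreasing, and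
hence the Zig-Zag rate `t ↦ ∑_i (∂_i U(x + t·v)·v_i)₊` is non-decreasing. -/
theorem zigzag_rate_monotone_of_diag_dominant (d : ℕ) (U : (Fin d → ℝ) → ℝ)
    (hU : ContDiff ℝ 2 U)
    (hdom : ∀ x : Fin d → ℝ, ∀ i : Fin d,
      ∑ j ∈ Finset.univ \ {i}, |iteratedFDeriv ℝ 2 U x ![Pi.single i 1, Pi.single j 1]|
        ≤ iteratedFDeriv ℝ 2 U x ![Pi.single i 1, Pi.single i 1])
    (x v : Fin d → ℝ) (hv : ∀ j, v j = 1 ∨ v j = -1) :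
    (∀ i : Fin d, Monotone fun t : ℝ => fderiv ℝ U (x + t • v) (Pi.single i 1) * v i) ∧
    Monotone fun t : ℝ => ∑ i, max (fderiv ℝ U (x + t • v) (Pi.single i 1) * v i) 0 := by
  set e : Fin d → (Fin d → ℝ) := fun i => Pi.single i 1 with he
  have hF : ContDiff ℝ 1 (fderiv ℝ U) := hU.fderiv_right (by norm_num)
  have hv2 : ∀ j, v j * v j = 1 := by
    intro j; rcases hv j with h | h <;> rw [h] <;> norm_num
  have hvabs : ∀ j, |v j| = 1 := by
    intro j; rcases hv j with h | h <;> rw [h] <;> norm_num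
  have hvsum : v = ∑ j, v j • e j := by
    funext k
    simp only [Finset.sum_apply, Pi.smul_apply, he, smul_eq_mul]
    rw [Finset.sum_eq_single k]
    · simp
    · intro b _ hb; simp [Pi.single_eq_of_ne' hb]
    · simp
  have key : ∀ (i : Fin d) (t : ℝ), HasDerivAt
      (fun t : ℝ => fderiv ℝ U (x + t • v) (e i) * v i)
      (fderiv ℝ (fderiv ℝ U) (x + t • v) v (e i) * v i) t := by
    intro i t
    have line : HasDerivAt (fun t : ℝ => x + t • v) v t := by
      have h1 : HasDerivAt (fun t : ℝ => t • v) ((1:ℝ) • v) t :=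
        (hasDerivAt_id t).smul_const v
      rw [one_smul] at h1
      exact h1.const_add x
    have hFy : HasFDerivAt (fderiv ℝ U) (fderiv ℝ (fderiv ℝ U) (x + t • v)) (x + t • v) :=
      ((hF.differentiable one_ne_zero) (x + t • v)).hasFDerivAt
    have comp : HasDerivAt (fun t : ℝ => fderiv ℝ U (x + t • v))
        (fderiv ℝ (fderiv ℝ U) (x + t • v) v) t := hFy.comp_hasDerivAt t line
    have happ : HasDerivAt (fun t : ℝ => fderiv ℝ U (x + t • v) (e i))
        (fderiv ℝ (fderiv ℝ U) (x + t • v) v (e i)) t := by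
      have := comp.clm_apply (hasDerivAt_const t (e i))
      simpa using this
    exact happ.mul_const (v i)
  have hderiv_nonneg : ∀ (i : Fin d) (t : ℝ),
      0 ≤ fderiv ℝ (fderiv ℝ U) (x + t • v) v (e i) * v i := by
    intro i t
    set y := x + t • v with hy
    set B := fderiv ℝ (fderiv ℝ U) y with hB
    have hsym : ∀ a b, B a b = B b a :=
      (hU.contDiffAt.isSymmSndFDerivAt (by simp [minSmoothness_of_isRCLikeNormedField]) : IsSymmSndFDerivAt ℝ U y)
    have hexp : B v (e i) = ∑ j, v j * B (e i) (e j) := by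
      conv_lhs => rw [hvsum]
      rw [map_sum]
      simp only [map_smul, ContinuousLinearMap.coe_sum', Finset.sum_apply,
        ContinuousLinearMap.coe_smul', Pi.smul_apply, smul_eq_mul]
      exact Finset.sum_congr rfl fun j _ => by rw [hsym (e j) (e i)]
    have hdom' := hdom y i
    have hit : ∀ a b : Fin d, iteratedFDeriv ℝ 2 U y ![e a, e b] = B (e a) (e b) := by
      intro a b
      rw [iteratedFDeriv_two_apply]
      simp [hB]
    rw [hit i i] at hdom'
    have hdom'' : ∑ j ∈ Finset.univ \ {i}, |B (e i) (e j)| ≤ B (e i) (e i) := by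
      refine le_trans (le_of_eq ?_) hdom'
      exact Finset.sum_congr rfl fun j _ => by rw [hit i j]
    rw [hexp, Finset.sum_mul]
    rw [← Finset.add_sum_erase _ _ (Finset.mem_univ i), ← Finset.sdiff_singleton_eq_erase]
    have h1 : v i * B (e i) (e i) * v i = B (e i) (e i) := by
      rw [mul_comm (v i) _, mul_assoc, hv2]; ring
    rw [h1]
    have h2 : ∀ j ∈ Finset.univ \ {i}, -|B (e i) (e j)| ≤ v j * B (e i) (e j) * v i := by
      intro j _
      have : |v j * B (e i) (e j) * v i| = |B (e i) (e j)| := by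
        rw [abs_mul, abs_mul, hvabs, hvabs]; ring
      linarith [neg_abs_le (v j * B (e i) (e j) * v i), this.ge, this.le]
    calc (0:ℝ) = B (e i) (e i) + ∑ j ∈ Finset.univ \ {i}, -|B (e i) (e j)| - 
          (B (e i) (e i) - ∑ j ∈ Finset.univ \ {i}, |B (e i) (e j)|) := by
            rw [Finset.sum_neg_distrib]; ring
      _ ≤ B (e i) (e i) + ∑ j ∈ Finset.univ \ {i}, -|B (e i) (e j)| := by
            linarith [hdom'']
      _ ≤ B (e i) (e i) + ∑ j ∈ Finset.univ \ {i}, v j * B (e i) (e j) * v i :=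
            add_le_add_right (Finset.sum_le_sum h2) _
  have hmono : ∀ i : Fin d, Monotone fun t : ℝ => fderiv ℝ U (x + t • v) (e i) * v i := by
    intro i
    apply monotone_of_deriv_nonneg
    · intro t; exact (key i t).differentiableAt
    · intro t; rw [(key i t).deriv]; exact hderiv_nonneg i t
  refine ⟨hmono, ?_⟩
  intro a b hab
  exact Finset.sum_le_sum fun i _ => max_le_max (hmono i hab) le_rfl
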